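/- Let k ≥ 1 and let σ be a finite list of intervals such that the set of lengths of intervals occurring in σ has at most k elements. Then every pairwise-disjoint finite set T of intervals, each of which occurs in σ, satisfies |T| ≤ 2k · |alg1(σ)|. (That is, Algorithm 1 is 2k-competitive for any-order unweighted interval selection with k different lengths.) -/

import Mathlib

open scoped Classical

/-- An interval: a pair `(s, f)` of reals with `s < f`, identified with `[s, f) ⊆ ℝ`. -/
structure Ivl where
  s : ℝ
  f : ℝ
  lt : s < f

namespace Ivl

noncomputable instance : DecidableEq Ivl := fun a b =>
  decidable_of_iff (a.s = b.s ∧ a.f = b.f) (by cases a; cases b; simp)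

/-- The set of points covered by an interval. -/
def toSet (I : Ivl) : Set ℝ := Set.Ico I.s I.f

/-- The length of an interval. -/
def length (I : Ivl) : ℝ := I.f - I.s

/-- Two intervals conflict if their point sets intersect. -/
def Conflict (I J : Ivl) : Prop := (I.toSet ∩ J.toSet).Nonempty

/-- A finite set of intervals is feasible (pairwise disjoint) if no two distinct members
conflict. -/
def Feasible (S : Finset Ivl) : Prop :=
  ∀ I ∈ S, ∀ J ∈ S, I ≠ J → ¬ Conflict I J

end Ivl

/-- One step of Algorithm 1: if some currently scheduled interval properly contains the new
interval `I`, replace it with `I`; otherwise take `I` iff it conflicts with nothing. -/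
noncomputable def alg1Step (S : Finset Ivl) (I : Ivl) : Finset Ivl :=
  if h : ∃ I' ∈ S, I.toSet ⊂ I'.toSet then
    insert I (S.erase h.choose)
  else if ∀ I' ∈ S, ¬ Ivl.Conflict I I' then insert I S
  else S

/-- Algorithm 1 run on a list of online arrivals. -/
noncomputable def alg1 (σ : List Ivl) : Finset Ivl := σ.foldl alg1Step ∅

/- Auxiliary development for the proof. -/


namespace Alg1Proof

lemma start_mem_toSet (I : Ivl) : I.s ∈ I.toSet := ⟨le_refl _, I.lt⟩

lemma conflict_symm {I J : Ivl} (h : Ivl.Conflict I J) : Ivl.Conflict J I := by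
  obtain ⟨x, hx⟩ := h; exact ⟨x, hx.2, hx.1⟩

lemma conflict_of_subset {I J : Ivl} (h : I.toSet ⊆ J.toSet) : Ivl.Conflict I J :=
  ⟨I.s, start_mem_toSet I, h (start_mem_toSet I)⟩

lemma length_lt_of_ssubset {I J : Ivl} (h : I.toSet ⊂ J.toSet) : I.length < J.length := by
  have hsub := h.1
  rw [Ivl.toSet, Ivl.toSet, Set.Ico_subset_Ico_iff I.lt] at hsub
  have hne : ¬ (J.s = I.s ∧ I.f = J.f) := by
    rintro ⟨h1, h2⟩
    exact h.2 (by rw [Ivl.toSet, Ivl.toSet, h1, h2])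
  rw [Ivl.length, Ivl.length]
  rcases lt_or_eq_of_le hsub.1 with h1 | h1
  · linarith [hsub.2]
  · rcases lt_or_eq_of_le hsub.2 with h2 | h2
    · linarith
    · exact absurd ⟨h1, h2⟩ hne

/-- The charging relation: seen interval `J` is charged to chain element `C` either via the
left endpoint of `C` or the right endpoint of `C`. -/
def chargeP (J C : Ivl) : Prop := C.s ∈ J.toSet ∨ (J.s < C.f ∧ C.f ≤ J.f)

def chRel : Ivl → Ivl → Prop := fun C D => D.toSet ⊂ C.toSet

instance : IsTrans Ivl chRel := ⟨fun _ _ _ h1 h2 => h2.trans h1⟩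

/-- Invariant of the algorithm. -/
def Inv (seen : List Ivl) (S : Finset Ivl) : Prop :=
  Ivl.Feasible S ∧ ∃ ch : Ivl → List Ivl,
    (∀ I ∈ S, (ch I).getLast? = some I ∧ (ch I).Chain' chRel ∧ ∀ C ∈ ch I, C ∈ seen) ∧
    (∀ J ∈ seen, ∃ I ∈ S, ∃ C ∈ ch I, chargeP J C)

lemma mem_of_getLast? {l : List Ivl} {a : Ivl} (h : l.getLast? = some a) : a ∈ l := by
  obtain ⟨h1, h2⟩ := List.mem_getLast?_eq_getLast (l := l) (x := a) h
  rw [h2]; exact List.getLast_mem h1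

lemma inv_step {seen : List Ivl} {S : Finset Ivl} (hinv : Inv seen S) (I : Ivl) :
    Inv (seen ++ [I]) (alg1Step S I) := by
  obtain ⟨hfeas, ch, hch, hcharge⟩ := hinv
  rw [alg1Step]
  split_ifs with h1 h2
  · -- replacement case
    obtain ⟨hI''S, hIsub⟩ := h1.choose_spec
    set I'' := h1.choose with hI''
    have hne0 : I ≠ I'' := fun he => hIsub.2 (by rw [← he])
    have hInotS : I ∉ S := fun hIS =>
      hfeas I hIS I'' hI''S hne0 (conflict_of_subset hIsub.1)
    constructor
    · -- feasibility
      intro A hA B hB hAB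
      rcases Finset.mem_insert.1 hA with rfl | hA'
      · rcases Finset.mem_insert.1 hB with rfl | hB'
        · exact absurd rfl hAB
        · have hBS := Finset.mem_of_mem_erase hB'
          have hBne := Finset.ne_of_mem_erase hB'
          intro hc
          obtain ⟨x, hx1, hx2⟩ := hc
          exact hfeas I'' hI''S B hBS (Ne.symm hBne) ⟨x, hIsub.1 hx1, hx2⟩
      · rcases Finset.mem_insert.1 hB with rfl | hB'
        · have hAS := Finset.mem_of_mem_erase hA'
          have hAne := Finset.ne_of_mem_erase hA'
          intro hc
          obtain ⟨x, hx1, hx2⟩ := hc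
          exact hfeas A hAS I'' hI''S hAne ⟨x, hx1, hIsub.1 hx2⟩
        · exact hfeas A (Finset.mem_of_mem_erase hA') B (Finset.mem_of_mem_erase hB') hAB
    · refine ⟨Function.update ch I (ch I'' ++ [I]), ?_, ?_⟩
      · intro A hA
        rcases Finset.mem_insert.1 hA with rfl | hA'
        · rw [Function.update_self]
          obtain ⟨hlast, hchain, hmem⟩ := hch I'' hI''S
          refine ⟨List.getLast?_concat, ?_, ?_⟩
          · rw [List.Chain', List.isChain_append]
            refine ⟨hchain, List.isChain_singleton _, ?_⟩
            intro x hx y hy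
            simp only [List.head?] at hy
            rw [hlast] at hx
            simp only [Option.mem_def, Option.some.injEq] at hx hy
            subst hx; subst hy
            exact hIsub
          · intro C hC
            rcases List.mem_append.1 hC with hC | hC
            · exact List.mem_append.2 (Or.inl (hmem C hC))
            · simp at hC; subst hC; simp
        · have hAne : A ≠ I := by
            intro he; subst he; exact hInotS (Finset.mem_of_mem_erase hA')
          rw [Function.update_of_ne hAne]
          obtain ⟨hlast, hchain, hmem⟩ := hch A (Finset.mem_of_mem_erase hA')
          exact ⟨hlast, hchain, fun C hC => List.mem_append.2 (Or.inl (hmem C hC))⟩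
      · intro J hJ
        rcases List.mem_append.1 hJ with hJ | hJ
        · obtain ⟨A, hAS, C, hCA, hP⟩ := hcharge J hJ
          by_cases hAI : A = I''
          · subst hAI
            refine ⟨I, Finset.mem_insert_self _ _, C, ?_, hP⟩
            rw [Function.update_self]
            exact List.mem_append.2 (Or.inl hCA)
          · have hAne : A ≠ I := fun he => hInotS (he ▸ hAS)
            refine ⟨A, Finset.mem_insert_of_mem (Finset.mem_erase.2 ⟨hAI, hAS⟩), C, ?_, hP⟩
            rw [Function.update_of_ne hAne]; exact hCA
        · simp at hJ; subst hJ
          refine ⟨J, Finset.mem_insert_self _ _, J, ?_, Or.inl (start_mem_toSet J)⟩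
          rw [Function.update_self]
          exact List.mem_append.2 (Or.inr (by simp))
  · -- insertion case
    have hInotS : I ∉ S := by
      intro hIS
      exact h2 I hIS ⟨I.s, start_mem_toSet I, start_mem_toSet I⟩
    constructor
    · intro A hA B hB hAB
      rcases Finset.mem_insert.1 hA with rfl | hA'
      · rcases Finset.mem_insert.1 hB with rfl | hB'
        · exact absurd rfl hAB
        · exact h2 B hB'
      · rcases Finset.mem_insert.1 hB with rfl | hB'
        · exact fun hc => h2 A hA' (conflict_symm hc)
        · exact hfeas A hA' B hB' hAB
    · refine ⟨Function.update ch I [I], ?_, ?_⟩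
      · intro A hA
        rcases Finset.mem_insert.1 hA with rfl | hA'
        · simp; exact List.isChain_singleton _
        · have hAne : A ≠ I := fun he => hInotS (he ▸ hA')
          rw [Function.update_of_ne hAne]
          obtain ⟨hlast, hchain, hmem⟩ := hch A hA'
          exact ⟨hlast, hchain, fun C hC => List.mem_append.2 (Or.inl (hmem C hC))⟩
      · intro J hJ
        rcases List.mem_append.1 hJ with hJ | hJ
        · obtain ⟨A, hAS, C, hCA, hP⟩ := hcharge J hJ
          have hAne : A ≠ I := fun he => hInotS (he ▸ hAS)
          refine ⟨A, Finset.mem_insert_of_mem hAS, C, ?_, hP⟩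
          rw [Function.update_of_ne hAne]; exact hCA
        · simp at hJ; subst hJ
          exact ⟨J, Finset.mem_insert_self _ _, J, by simp, Or.inl (start_mem_toSet J)⟩
  · -- rejection case
    push_neg at h2
    obtain ⟨I₀, hI₀S, hconf⟩ := h2
    have hns : ¬ I.toSet ⊂ I₀.toSet := fun hc => h1 ⟨I₀, hI₀S, hc⟩
    refine ⟨hfeas, ch, fun A hA => ?_, ?_⟩
    · obtain ⟨hlast, hchain, hmem⟩ := hch A hA
      exact ⟨hlast, hchain, fun C hC => List.mem_append.2 (Or.inl (hmem C hC))⟩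
    · intro J hJ
      rcases List.mem_append.1 hJ with hJ | hJ
      · exact hcharge J hJ
      · simp at hJ; subst hJ
        refine ⟨I₀, hI₀S, I₀, mem_of_getLast? (hch I₀ hI₀S).1, ?_⟩
        obtain ⟨x, ⟨hx1, hx2⟩, hx3, hx4⟩ := hconf
        by_cases hs : J.s < I₀.s
        · exact Or.inl ⟨le_of_lt hs, lt_of_le_of_lt hx3 hx2⟩
        · push_neg at hs
          by_cases hf : I₀.f < J.f
          · exact Or.inr ⟨lt_of_le_of_lt hx1 hx4, le_of_lt hf⟩
          · push_neg at hf
            have hsub : J.toSet ⊆ I₀.toSet := Set.Ico_subset_Ico hs hf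
            have heq : J.toSet = I₀.toSet := by
              by_contra hne
              exact hns (lt_of_le_of_ne hsub hne)
            exact Or.inl (heq ▸ start_mem_toSet I₀)

lemma inv_foldl (σ : List Ivl) : ∀ (seen : List Ivl) (S : Finset Ivl),
    Inv seen S → Inv (seen ++ σ) (σ.foldl alg1Step S) := by
  induction σ with
  | nil => intro seen S h; simpa using h
  | cons I σ ih =>
    intro seen S h
    have := ih (seen ++ [I]) (alg1Step S I) (inv_step h I)
    simpa using this

lemma inv_alg1 (σ : List Ivl) : Inv σ (alg1 σ) := by
  have := inv_foldl σ [] ∅ ⟨fun A hA => absurd hA (Finset.notMem_empty A), fun _ => [],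
    fun A hA => absurd hA (Finset.notMem_empty A), fun J hJ => absurd hJ List.not_mem_nil⟩
  simpa [alg1] using this

end Alg1Proof

open Alg1Proof

/-- Algorithm 1 is `2k`-competitive for any-order unweighted interval selection with at most
`k` distinct interval lengths. -/
theorem alg1_two_k_competitive (k : ℕ) (hk : 1 ≤ k) (σ : List Ivl)
    (hlen : (σ.map Ivl.length).toFinset.card ≤ k)
    (T : Finset Ivl) (hT : ∀ I ∈ T, I ∈ σ) (hfeas : Ivl.Feasible T) :
    T.card ≤ 2 * k * (alg1 σ).card := by
  obtain ⟨hfeasS, ch, hch, hcharge⟩ := inv_alg1 σ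
  set S := alg1 σ with hS
  -- target finset
  set U : Finset (Ivl × Bool) := S.biUnion (fun I => (ch I).toFinset ×ˢ (Finset.univ : Finset Bool)) with hU
  -- the charging function
  set cf : Ivl → Ivl × Bool := fun J =>
    if h : ∃ C, (∃ I ∈ S, C ∈ ch I) ∧ chargeP J C then
      (h.choose, if h.choose.s ∈ J.toSet then true else false)
    else (J, true) with hcf
  have hex : ∀ J ∈ T, ∃ C, (∃ I ∈ S, C ∈ ch I) ∧ chargeP J C := by
    intro J hJ
    obtain ⟨I, hI, C, hC, hP⟩ := hcharge J (hT J hJ)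
    exact ⟨C, ⟨I, hI, hC⟩, hP⟩
  have hmapsto : ∀ J ∈ T, cf J ∈ U := by
    intro J hJ
    have h := hex J hJ
    simp only [hcf, dif_pos h]
    obtain ⟨⟨I, hI, hC⟩, _⟩ := h.choose_spec
    exact Finset.mem_biUnion.2 ⟨I, hI, Finset.mem_product.2 ⟨List.mem_toFinset.2 hC, Finset.mem_univ _⟩⟩
  have hinj : Set.InjOn cf ↑T := by
    intro J hJ J' hJ' heq
    by_contra hne
    have hJT : J ∈ T := hJ
    have hJ'T : J' ∈ T := hJ'
    have h := hex J hJT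
    have h' := hex J' hJ'T
    simp only [hcf, dif_pos h, dif_pos h'] at heq
    have hC : h.choose = h'.choose := congrArg Prod.fst heq
    set C := h.choose with hCdef
    have hside := congrArg Prod.snd heq
    simp only at hside
    have hPJ : chargeP J C := h.choose_spec.2
    have hPJ' : chargeP J' h'.choose := h'.choose_spec.2
    rw [← hC] at hPJ' hside
    have hdisj := hfeas J hJT J' hJ'T hne
    by_cases hmem : C.s ∈ J.toSet
    · rw [if_pos hmem] at hside
      have hmem' : C.s ∈ J'.toSet := by
        by_contra hmem'
        rw [if_neg hmem'] at hside
        exact Bool.noConfusion hside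
      exact hdisj ⟨C.s, hmem, hmem'⟩
    · rw [if_neg hmem] at hside
      have hmem' : C.s ∉ J'.toSet := by
        intro hmem'
        rw [if_pos hmem'] at hside
        exact Bool.noConfusion hside
      have hR : J.s < C.f ∧ C.f ≤ J.f := hPJ.resolve_left hmem
      have hR' : J'.s < C.f ∧ C.f ≤ J'.f := hPJ'.resolve_left hmem'
      refine hdisj ⟨max J.s J'.s, ⟨le_max_left _ _, ?_⟩, ⟨le_max_right _ _, ?_⟩⟩
      · exact lt_of_lt_of_le (max_lt hR.1 hR'.1) hR.2
      · exact lt_of_lt_of_le (max_lt hR.1 hR'.1) hR'.2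
  have hTU : T.card ≤ U.card := Finset.card_le_card_of_injOn cf hmapsto hinj
  -- bound U.card
  have hchain_card : ∀ I ∈ S, ((ch I).toFinset ×ˢ (Finset.univ : Finset Bool)).card ≤ 2 * k := by
    intro I hI
    obtain ⟨hlast, hchain, hmem⟩ := hch I hI
    have hpw : (ch I).Pairwise chRel := List.isChain_iff_pairwise.1 hchain
    have hlen_inj : Set.InjOn Ivl.length ↑(ch I).toFinset := by
      intro C hC D hD hCD
      by_contra hne
      have hpw' : (ch I).Pairwise (fun A B => chRel A B ∨ chRel B A) :=
        hpw.imp (fun h => Or.inl h)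
      have := (haveI : Std.Symm (fun A B : Ivl => chRel A B ∨ chRel B A) := ⟨fun A B h => h.symm⟩; hpw'.forall) (List.mem_toFinset.1 hC) (List.mem_toFinset.1 hD) hne
      rcases this with h | h
      · exact absurd hCD (ne_of_gt (length_lt_of_ssubset h))
      · exact absurd hCD (ne_of_lt (length_lt_of_ssubset h))
    have hmaps : ∀ C ∈ (ch I).toFinset, Ivl.length C ∈ (σ.map Ivl.length).toFinset := by
      intro C hC
      exact List.mem_toFinset.2 (List.mem_map.2 ⟨C, hmem C (List.mem_toFinset.1 hC), rfl⟩)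
    have h1 : (ch I).toFinset.card ≤ k :=
      le_trans (Finset.card_le_card_of_injOn Ivl.length hmaps hlen_inj) hlen
    rw [Finset.card_product]
    simp only [Finset.card_univ, Fintype.card_bool]
    omega
  have hUcard : U.card ≤ 2 * k * S.card := by
    calc U.card ≤ ∑ I ∈ S, ((ch I).toFinset ×ˢ (Finset.univ : Finset Bool)).card :=
          Finset.card_biUnion_le
      _ ≤ ∑ _I ∈ S, 2 * k := Finset.sum_le_sum hchain_card
      _ = 2 * k * S.card := by rw [Finset.sum_const, smul_eq_mul, mul_comm]
  exact le_trans hTU hUcard
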